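/- arXiv:2206.14345 — 2 statements merged into one kernel-verified Lean document; each statement's English description precedes it below -/
import Mathlib

section
/- The discriminant of the trinomial F(x) = x^7 + a x^5 + b is -b^4(7^7 b^2 + 2^2 · 5^5 · a^7). -/
open Polynomial

/-- The discriminant of `F(x) = x^7 + a x^5 + b`, defined as
`(-1)^(7·6/2)` times the resultant of `F` and `F'` (for monic `F`, this resultant
is the product of the values of `F'` at the roots of `F` in `ℂ`), equals
`-b^4 (7^7 b^2 + 2^2 · 5^5 · a^7)`. -/
theorem disc_trinomial_x7_ax5_b (a b : ℤ)
    (F : Polynomial ℂ) (hF : F = X ^ 7 + C (a : ℂ) * X ^ 5 + C (b : ℂ)) :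
    (-1 : ℂ) ^ (7 * 6 / 2) * ((F.roots).map (fun r => F.derivative.eval r)).prod =
      -(b : ℂ) ^ 4 * (7 ^ 7 * (b : ℂ) ^ 2 + 2 ^ 2 * 5 ^ 5 * (a : ℂ) ^ 7) := by
  have hmonic : F.Monic := by subst hF; monicity!
  have hdeg : F.natDegree = 7 := by subst hF; compute_degree!
  have hsplits : Splits F := IsAlgClosed.splits F
  have hcard : Multiset.card F.roots = 7 := by
    rw [splits_iff_card_roots.mp hsplits, hdeg]
  have hprodF : F = (F.roots.map fun r => X - C r).prod :=
    hsplits.eq_prod_roots_of_monic hmonic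
  have heval : ∀ z : ℂ, F.eval z = (F.roots.map fun r => z - r).prod := by
    intro z
    conv_lhs => rw [hprodF]
    rw [eval_multiset_prod, Multiset.map_map]
    simp
  have hroots : F.roots.prod = -(b : ℂ) := by
    have h := hsplits.coeff_zero_eq_prod_roots_of_monic hmonic
    have hc0 : F.coeff 0 = (b : ℂ) := by subst hF; simp
    rw [hdeg, hc0] at h
    linear_combination h
  obtain ⟨s, hs⟩ := IsAlgClosed.exists_pow_nat_eq (-5 * (a : ℂ) / 7) (n := 2) (by norm_num)
  have h7 : (7 : ℂ) * s ^ 2 = -5 * a := by rw [hs]; ring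
  have hder : ∀ r : ℂ, F.derivative.eval r = 7 * ((r - s) * (r + s)) * r ^ 4 := by
    intro r
    subst hF
    simp only [derivative_add, derivative_mul, derivative_X_pow, derivative_C, eval_add,
      eval_mul, eval_pow, eval_X, eval_C, eval_natCast, eval_mul, zero_mul, mul_zero,
      eval_zero, add_zero, zero_add]
    push_cast
    linear_combination (r ^ 4) * h7
  have hsplit : ((F.roots).map (fun r => F.derivative.eval r)).prod =
      7 ^ 7 * (((F.roots).map (fun r => r - s)).prod * ((F.roots).map (fun r => r + s)).prod)
        * F.roots.prod ^ 4 := by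
    rw [Multiset.map_congr rfl (fun r _ => hder r),
      Multiset.prod_map_mul, Multiset.prod_map_mul, Multiset.prod_map_mul,
      Multiset.prod_map_pow]
    simp only [Multiset.map_const', Multiset.prod_replicate, hcard, Multiset.map_id']
  have hms : ((F.roots).map (fun r => r - s)).prod = - F.eval s := by
    have hmc : (F.roots).map (fun r => r - s)
        = (F.roots).map (fun r => (-1 : ℂ) * (s - r)) :=
      Multiset.map_congr rfl (fun r _ => by ring)
    rw [hmc, Multiset.prod_map_mul, Multiset.map_const', Multiset.prod_replicate, hcard,
      heval s]
    ring
  have hps : ((F.roots).map (fun r => r + s)).prod = - F.eval (-s) := by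
    have hmc : (F.roots).map (fun r => r + s)
        = (F.roots).map (fun r => (-1 : ℂ) * (-s - r)) :=
      Multiset.map_congr rfl (fun r _ => by ring)
    rw [hmc, Multiset.prod_map_mul, Multiset.map_const', Multiset.prod_replicate, hcard,
      heval (-s)]
    ring
  have hFs : ∀ z : ℂ, F.eval z = z ^ 7 + a * z ^ 5 + b := by
    intro z; subst hF; simp
  rw [hsplit, hms, hps, hroots, hFs, hFs]
  linear_combination ((b : ℂ) ^ 4 * (117649 * s ^ 12 + 151263 * (a : ℂ) * s ^ 10
    + 9604 * (a : ℂ) ^ 2 * s ^ 8 - 6860 * (a : ℂ) ^ 3 * s ^ 6 + 4900 * (a : ℂ) ^ 4 * s ^ 4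
    - 3500 * (a : ℂ) ^ 5 * s ^ 2 + 2500 * (a : ℂ) ^ 6)) * h7
end

section
/- Let K be a number field and p a rational prime. If the number of distinct prime ideals of the ring of integers of K lying above p with residue degree f exceeds the number of monic irreducible polynomials of degree f in 𝔽_p[x] for some positive integer f, then p divides the index (A_K : ℤ[η]) for every integral generator η of K. -/
open NumberField Polynomial

set_option synthInstance.maxHeartbeats 1000000
set_option maxHeartbeats 2000000

private lemma exists_irreducible_factor_of_prime_over (K : Type*) [Field K] [NumberField K] (p : ℕ) (hp : p.Prime) (f : ℕ)
    (η : 𝓞 K) (n : ℕ) (hpn : ¬ p ∣ n)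
    (hnmem : ∀ s : 𝓞 K, (n : 𝓞 K) * s ∈ Algebra.adjoin ℤ {η})
    (P : Ideal (𝓞 K)) (hmax : P.IsMaximal)
    (hcomap : Ideal.comap (algebraMap ℤ (𝓞 K)) P = Ideal.span {(p : ℤ)})
    (hdeg : Ideal.inertiaDeg' (Ideal.span {(p : ℤ)}) P = f) :
    ∃ g : (ZMod p)[X], g.Monic ∧ Irreducible g ∧ g.natDegree = f ∧
      ∀ F : ℤ[X], (Polynomial.aeval η F ∈ P ↔ g ∣ F.map (Int.castRingHom (ZMod p))) := by
  haveI : Fact p.Prime := ⟨hp⟩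
  have hnz : (n : ZMod p) ≠ 0 := fun hc => hpn ((ZMod.natCast_eq_zero_iff n p).mp hc)
  have hpP : algebraMap ℤ (𝓞 K) (p : ℤ) ∈ P := by
    have : (p : ℤ) ∈ Ideal.comap (algebraMap ℤ (𝓞 K)) P := by
      rw [hcomap]; exact Ideal.mem_span_singleton_self _
    exact this
  haveI hmax' := hmax
  haveI : Nontrivial ((𝓞 K) ⧸ P) := Ideal.Quotient.nontrivial_iff.mpr hmax.ne_top
  haveI : CharP ((𝓞 K) ⧸ P) p := by
    rw [CharP.charP_iff_prime_eq_zero hp]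
    rw [show ((p : ℕ) : (𝓞 K) ⧸ P) = Ideal.Quotient.mk P ((p : ℕ) : 𝓞 K) by rfl]
    rw [Ideal.Quotient.eq_zero_iff_mem]
    simpa using hpP
  letI : Algebra (ZMod p) ((𝓞 K) ⧸ P) := ZMod.algebra _ p
  set κ := (𝓞 K) ⧸ P with hκ
  set φ : (ZMod p)[X] →ₐ[ZMod p] κ := Polynomial.aeval (Ideal.Quotient.mk P η) with hφ
  have hcomm : ∀ F : ℤ[X], φ (F.map (Int.castRingHom (ZMod p)))
      = Ideal.Quotient.mk P (Polynomial.aeval η F) := by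
    have heq : (φ.toRingHom.comp (Polynomial.mapRingHom (Int.castRingHom (ZMod p))))
        = (Ideal.Quotient.mk P).comp ((Polynomial.aeval η : ℤ[X] →ₐ[ℤ] 𝓞 K) : ℤ[X] →+* 𝓞 K) := by
      apply Polynomial.ringHom_ext
      · intro a
        simp only [RingHom.coe_comp, Function.comp_apply, Polynomial.coe_mapRingHom]
        rw [show (Polynomial.C a : ℤ[X]) = (a : ℤ[X]) by simp]
        simp [map_intCast]
      · simp [hφ]
    intro F
    exact RingHom.congr_fun heq F
  have hsurj : Function.Surjective φ := by
    intro x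
    obtain ⟨s, rfl⟩ := Ideal.Quotient.mk_surjective x
    have hmem : (n : 𝓞 K) * s ∈ (Polynomial.aeval η : ℤ[X] →ₐ[ℤ] 𝓞 K).range := by
      rw [← Algebra.adjoin_singleton_eq_range_aeval]; exact hnmem s
    obtain ⟨F, hF⟩ := hmem
    refine ⟨Polynomial.C ((n : ZMod p)⁻¹) * F.map (Int.castRingHom (ZMod p)), ?_⟩
    rw [map_mul, hcomm F]
    rw [show (Polynomial.aeval η) F = (n : 𝓞 K) * s from hF]
    rw [Polynomial.aeval_C, map_mul]
    rw [show (Ideal.Quotient.mk P ((n : ℕ) : 𝓞 K)) = algebraMap (ZMod p) κ ((n : ℕ) : ZMod p) by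
      rw [map_natCast, map_natCast]]
    rw [← mul_assoc, ← map_mul, inv_mul_cancel₀ hnz, map_one, one_mul]
  -- integrality of η
  have hint : IsIntegral ℤ η := by
    have : Algebra.IsIntegral ℤ (𝓞 K) := inferInstance
    exact Algebra.IsIntegral.isIntegral η
  have hm : (minpoly ℤ η).Monic := minpoly.monic hint
  have hmbar_ne : (minpoly ℤ η).map (Int.castRingHom (ZMod p)) ≠ 0 :=
    (hm.map _).ne_zero
  have hmbar_ker : (minpoly ℤ η).map (Int.castRingHom (ZMod p)) ∈ RingHom.ker φ := by
    rw [RingHom.mem_ker, hcomm, minpoly.aeval, map_zero]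
  have hker_ne : RingHom.ker φ ≠ ⊥ := by
    intro hbot
    rw [hbot, Ideal.mem_bot] at hmbar_ker
    exact hmbar_ne hmbar_ker
  haveI : (RingHom.ker φ).IsPrime := by
    haveI : IsDomain κ := Ideal.Quotient.isDomain P
    exact RingHom.ker_isPrime φ
  set b := Submodule.IsPrincipal.generator (RingHom.ker φ : Ideal (ZMod p)[X]) with hb
  have hb_span : Ideal.span {b} = RingHom.ker φ := Ideal.span_singleton_generator _
  have hb_ne : b ≠ 0 := by
    intro h0
    rw [h0] at hb_span
    simp only [Set.singleton_zero, Ideal.span_zero] at hb_span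
    exact hker_ne hb_span.symm
  classical
  set g : (ZMod p)[X] := normalize b with hg
  have hg_ne : g ≠ 0 := by simpa [hg, normalize_eq_zero] using hb_ne
  have hg_monic : g.Monic := Polynomial.monic_normalize hb_ne
  have hg_span : Ideal.span {g} = RingHom.ker φ := by
    rw [hg, Ideal.span_singleton_eq_span_singleton.mpr (normalize_associated b)]
    exact hb_span
  have hg_irr : Irreducible g := by
    haveI hkm : (RingHom.ker φ : Ideal (ZMod p)[X]).IsMaximal := by
      haveI : IsDomain κ := Ideal.Quotient.isDomain P
      letI : Field κ := Ideal.Quotient.field P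
      exact RingHom.ker_isMaximal_of_surjective φ hsurj
    have hprime : Prime g := by
      rw [← Ideal.span_singleton_prime hg_ne, hg_span]
      exact hkm.isPrime
    exact hprime.irreducible
  -- degree computation
  have hfr1 : Module.finrank (ZMod p) κ = g.natDegree := by
    have e1 : ((ZMod p)[X] ⧸ RingHom.ker φ) ≃ₐ[ZMod p] κ :=
      Ideal.quotientKerAlgEquivOfSurjective hsurj
    have e2 : ((ZMod p)[X] ⧸ Ideal.span {g}) ≃ₐ[ZMod p] ((ZMod p)[X] ⧸ RingHom.ker φ) :=
      Ideal.quotientEquivAlgOfEq (ZMod p) hg_span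
    have h1 : Module.finrank (ZMod p) ((ZMod p)[X] ⧸ Ideal.span {g}) = g.natDegree := by
      have := (AdjoinRoot.powerBasis hg_ne).finrank
      rw [AdjoinRoot.powerBasis_dim] at this
      exact this
    rw [← e1.toLinearEquiv.finrank_eq, ← e2.toLinearEquiv.finrank_eq]
    exact h1
  have hg_deg : g.natDegree = f := by
    letI alg2 : Algebra (ℤ ⧸ Ideal.span {(p : ℤ)}) κ :=
      Ideal.Quotient.algebraQuotientOfLEComap (le_of_eq hcomap.symm)
    rw [Ideal.inertiaDeg', dif_pos hcomap] at hdeg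
    have hrank : Module.rank (ℤ ⧸ Ideal.span {(p : ℤ)}) κ = Module.rank (ZMod p) κ := by
      refine Algebra.rank_eq_of_equiv_equiv (Int.quotientSpanNatEquivZMod p)
        (RingEquiv.refl κ) ?_
      apply Ideal.Quotient.ringHom_ext
      exact RingHom.ext_int _ _
    have hfr2 : Module.finrank (ℤ ⧸ Ideal.span {(p : ℤ)}) κ = Module.finrank (ZMod p) κ :=
      congrArg Cardinal.toNat hrank
    rw [← hfr1, ← hfr2, hdeg]
  refine ⟨g, hg_monic, hg_irr, hg_deg, ?_⟩
  intro F
  rw [← Ideal.Quotient.eq_zero_iff_mem, ← hcomm F]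
  have hker_iff : φ (F.map (Int.castRingHom (ZMod p))) = 0 ↔
      F.map (Int.castRingHom (ZMod p)) ∈ RingHom.ker φ := Iff.rfl
  rw [hker_iff, ← hg_span, Ideal.mem_span_singleton]

/-- If the number `L_p(f)` of primes of `A_K` above `p` with residue degree `f` exceeds
the number `N_p(f)` of monic irreducible polynomials of degree `f` over `𝔽_p`, then `p`
divides the index `(A_K : ℤ[η])` of every integral generator `η` of `K`. -/
theorem dvd_index_of_more_primes_than_irreducibles
    (K : Type*) [Field K] [NumberField K] (p : ℕ) (hp : p.Prime) (f : ℕ) (hf : 0 < f)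
    (h : Nat.card {g : (ZMod p)[X] // g.Monic ∧ Irreducible g ∧ g.natDegree = f} <
      Nat.card {P : Ideal (𝓞 K) // P.IsMaximal ∧
        Ideal.comap (algebraMap ℤ (𝓞 K)) P = Ideal.span {(p : ℤ)} ∧
        Ideal.inertiaDeg' (Ideal.span {(p : ℤ)}) P = f}) :
    ∀ η : 𝓞 K, Algebra.adjoin ℚ {(η : K)} = ⊤ →
      p ∣ (Algebra.adjoin ℤ {η}).toSubring.toAddSubgroup.index := by
  haveI : Fact p.Prime := ⟨hp⟩
  intro η _hgen
  by_contra hpn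
  set n := (Algebra.adjoin ℤ {η}).toSubring.toAddSubgroup.index with hn
  have hnmem : ∀ s : 𝓞 K, (n : 𝓞 K) * s ∈ Algebra.adjoin ℤ {η} := by
    intro s
    have := AddSubgroup.nsmul_index_mem (Algebra.adjoin ℤ {η}).toSubring.toAddSubgroup s
    rw [nsmul_eq_mul] at this
    exact this
  -- the finite target
  haveI : NeZero p := ⟨hp.ne_zero⟩
  haveI hfin : Finite {g : (ZMod p)[X] // g.Monic ∧ Irreducible g ∧ g.natDegree = f} := by
    apply Finite.of_injective (fun g => (fun i : Fin (f + 1) => g.1.coeff i))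
    intro a b hab
    apply Subtype.ext
    apply Polynomial.ext
    intro i
    rcases le_or_gt i f with hi | hi
    · exact congrFun hab ⟨i, Nat.lt_succ_of_le hi⟩
    · have ha : a.1.natDegree < i := by rw [a.2.2.2]; exact hi
      have hb : b.1.natDegree < i := by rw [b.2.2.2]; exact hi
      rw [Polynomial.coeff_eq_zero_of_natDegree_lt ha,
        Polynomial.coeff_eq_zero_of_natDegree_lt hb]
  -- build the injection
  have key := fun (P : {P : Ideal (𝓞 K) // P.IsMaximal ∧
      Ideal.comap (algebraMap ℤ (𝓞 K)) P = Ideal.span {(p : ℤ)} ∧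
      Ideal.inertiaDeg' (Ideal.span {(p : ℤ)}) P = f}) =>
    exists_irreducible_factor_of_prime_over K p hp f η n hpn hnmem P.1 P.2.1 P.2.2.1 P.2.2.2
  choose G hG1 hG2 hG3 hG4 using key
  have hnotinQ : ∀ (Q : Ideal (𝓞 K)), Ideal.comap (algebraMap ℤ (𝓞 K)) Q = Ideal.span {(p : ℤ)} →
      (n : 𝓞 K) ∉ Q := by
    intro Q hQ hmem
    have h1 : ((n : ℤ) : 𝓞 K) ∈ Q := by exact_mod_cast hmem
    have h2 : (n : ℤ) ∈ Ideal.comap (algebraMap ℤ (𝓞 K)) Q := by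
      simpa using h1
    rw [hQ, Ideal.mem_span_singleton] at h2
    exact hpn (by exact_mod_cast h2)
  have hinj : Function.Injective
      (fun P => (⟨G P, hG1 P, hG2 P, hG3 P⟩ :
        {g : (ZMod p)[X] // g.Monic ∧ Irreducible g ∧ g.natDegree = f})) := by
    intro P Q hPQ
    have hGPQ : G P = G Q := congrArg Subtype.val hPQ
    have hle : P.1 ≤ Q.1 := by
      intro s hs
      have hmem : (n : 𝓞 K) * s ∈ (Polynomial.aeval η : ℤ[X] →ₐ[ℤ] 𝓞 K).range := by
        rw [← Algebra.adjoin_singleton_eq_range_aeval]; exact hnmem s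
      obtain ⟨F, hF⟩ := hmem
      have h1 : Polynomial.aeval η F ∈ P.1 := by
        rw [show (Polynomial.aeval η) F = (n : 𝓞 K) * s from hF]
        exact Ideal.mul_mem_left _ _ hs
      have h2 : Polynomial.aeval η F ∈ Q.1 := by
        rw [hG4 Q F, ← hGPQ]
        exact (hG4 P F).mp h1
      have h3 : (n : 𝓞 K) * s ∈ Q.1 := by
        rw [show ((n : 𝓞 K) * s) = (Polynomial.aeval η) F from hF.symm]
        exact h2
      haveI : Q.1.IsPrime := Q.2.1.isPrime
      rcases (Ideal.IsPrime.mem_or_mem ‹Q.1.IsPrime› h3) with hc | hc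
      · exact absurd hc (hnotinQ Q.1 Q.2.2.1)
      · exact hc
    exact Subtype.ext (P.2.1.eq_of_le Q.2.1.ne_top hle)
  have := Nat.card_le_card_of_injective _ hinj
  omega
end
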